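/- Minorization property: with g(λ) = b·λ − β⁻¹ Tr[exp(−β(C − diag(λ)))] and g⁰(λ) = b·λ − β⁻¹ Tr[exp(β diag(λ − λ⁰)) exp(−β(C − diag(λ⁰)))], one has g⁰(λ) ≤ g(λ) for all λ ∈ ℝⁿ, with equality at λ = λ⁰. -/

import Mathlib

open Matrix

set_option linter.unusedSectionVars false
set_option maxHeartbeats 1000000

section TracePow
open Finset
variable {ι : Type*} [Fintype ι] [DecidableEq ι]

/-- trace of M*M is at most trace of Mᵀ*M -/
lemma trace_mul_self_le_trace_transpose_mul (M : Matrix ι ι ℝ) :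
    (M * M).trace ≤ (Mᵀ * M).trace := by
  simp only [Matrix.trace, Matrix.diag, Matrix.mul_apply, Matrix.transpose_apply]
  calc ∑ i, ∑ j, M i j * M j i
      ≤ ∑ i, ∑ j, ((M i j)^2 + (M j i)^2) / 2 := by
        refine Finset.sum_le_sum fun i _ => Finset.sum_le_sum fun j _ => ?_
        nlinarith [sq_nonneg (M i j - M j i)]
    _ = ((∑ i, ∑ j, (M i j)^2) + (∑ i, ∑ j, (M j i)^2)) / 2 := by
        rw [← Finset.sum_add_distrib]
        simp [← Finset.sum_add_distrib, ← Finset.sum_div]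
    _ = ∑ i, ∑ j, (M j i)^2 := by
        rw [Finset.sum_comm (f := fun i j => (M i j)^2)]
        ring
    _ = ∑ i, ∑ j, M j i * M j i := by simp [sq]

lemma trace_transpose_mul_nonneg (M : Matrix ι ι ℝ) : 0 ≤ (Mᵀ * M).trace := by
  simp only [Matrix.trace, Matrix.diag, Matrix.mul_apply, Matrix.transpose_apply]
  refine Finset.sum_nonneg fun i _ => Finset.sum_nonneg fun j _ => mul_self_nonneg _

/-- Cauchy-Schwarz for the trace pairing of symmetric matrices. -/
lemma trace_mul_le_sqrt (U V : Matrix ι ι ℝ) (hU : Uᵀ = U) (hV : Vᵀ = V) :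
    (U * V).trace ≤ Real.sqrt ((U * U).trace) * Real.sqrt ((V * V).trace) := by
  have hUV : (U * V).trace = ∑ p : ι × ι, U p.1 p.2 * V p.1 p.2 := by
    simp only [Matrix.trace, Matrix.diag, Matrix.mul_apply, ← Finset.sum_product',
      Finset.univ_product_univ]
    refine Finset.sum_congr rfl fun p _ => ?_
    rw [show V p.2 p.1 = Vᵀ p.1 p.2 from rfl, hV]
  have hUU : (U * U).trace = ∑ p : ι × ι, (U p.1 p.2)^2 := by
    simp only [Matrix.trace, Matrix.diag, Matrix.mul_apply, ← Finset.sum_product',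
      Finset.univ_product_univ]
    refine Finset.sum_congr rfl fun p _ => ?_
    rw [show U p.2 p.1 = Uᵀ p.1 p.2 from rfl, hU, sq]
  have hVV : (V * V).trace = ∑ p : ι × ι, (V p.1 p.2)^2 := by
    simp only [Matrix.trace, Matrix.diag, Matrix.mul_apply, ← Finset.sum_product',
      Finset.univ_product_univ]
    refine Finset.sum_congr rfl fun p _ => ?_
    rw [show V p.2 p.1 = Vᵀ p.1 p.2 from rfl, hV, sq]
  rw [hUV, hUU, hVV]
  have h := Finset.sum_mul_sq_le_sq_mul_sq Finset.univ (fun p : ι × ι => U p.1 p.2)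
    (fun p : ι × ι => V p.1 p.2)
  have h1 : ∑ p : ι × ι, U p.1 p.2 * V p.1 p.2 ≤
      |∑ p : ι × ι, U p.1 p.2 * V p.1 p.2| := le_abs_self _
  refine h1.trans ?_
  rw [← Real.sqrt_sq_eq_abs, ← Real.sqrt_mul (by positivity)]
  exact Real.sqrt_le_sqrt h

lemma trace_pow_mul_comm (A B : Matrix ι ι ℝ) (m : ℕ) :
    ((A * B) ^ m).trace = ((B * A) ^ m).trace := by
  induction m with
  | zero => simp
  | succ m ih =>
    have hsemi : A * (B * A) ^ m = (A * B) ^ m * A :=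
      (SemiconjBy.pow_right (by simp [SemiconjBy, mul_assoc]) m)
    have h1 : (A * B) ^ (m + 1) = A * ((B * A) ^ m * B) := by
      rw [pow_succ, ← mul_assoc, ← hsemi, mul_assoc]
    rw [h1, Matrix.trace_mul_comm, mul_assoc, ← pow_succ]

set_option linter.unusedSectionVars false

/-- Joint induction: the halving step and the full chain. -/
lemma gt_key (k : ℕ) :
    (∀ X Y : Matrix ι ι ℝ, Xᵀ = X → Yᵀ = Y →
      ((X * Y) ^ (2 ^ (k+1))).trace ≤ ((X ^ 2 * Y ^ 2) ^ (2 ^ k)).trace) ∧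
    (∀ X Y : Matrix ι ι ℝ, Xᵀ = X → Yᵀ = Y →
      ((X * Y) ^ (2 ^ k)).trace ≤ (X ^ (2 ^ k) * Y ^ (2 ^ k)).trace) := by
  induction k with
  | zero =>
    constructor
    · intro X Y hX hY
      have hM : ((X * Y) * (X * Y)).trace ≤ ((X * Y)ᵀ * (X * Y)).trace :=
        trace_mul_self_le_trace_transpose_mul (X * Y)
      have ht : (X * Y)ᵀ = Y * X := by rw [Matrix.transpose_mul, hX, hY]
      have h2 : ((Y * X) * (X * Y)).trace = ((X ^ 2 * Y ^ 2) ^ 1).trace := by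
        rw [pow_one, show (Y * X) * (X * Y) = Y * (X ^ 2 * Y) by noncomm_ring,
          Matrix.trace_mul_comm, show X ^ 2 * Y * Y = X ^ 2 * Y ^ 2 by noncomm_ring]
      calc ((X * Y) ^ (2 ^ 1)).trace = ((X * Y) * (X * Y)).trace := by rw [pow_one, sq]
        _ ≤ ((X * Y)ᵀ * (X * Y)).trace := hM
        _ = ((X ^ 2 * Y ^ 2) ^ 1).trace := by rw [ht, h2]
    · intro X Y hX hY; simp
  | succ k ih =>
    obtain ⟨Pk, CHk⟩ := ih
    have hCH : ∀ X Y : Matrix ι ι ℝ, Xᵀ = X → Yᵀ = Y →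
        ((X * Y) ^ (2 ^ (k+1))).trace ≤ (X ^ (2 ^ (k+1)) * Y ^ (2 ^ (k+1))).trace := by
      intro X Y hX hY
      have h1 := Pk X Y hX hY
      have h2 := CHk (X ^ 2) (Y ^ 2) (by rw [Matrix.transpose_pow, hX]) (by rw [Matrix.transpose_pow, hY])
      have h3 : (X ^ 2) ^ (2 ^ k) = X ^ (2 ^ (k+1)) := by
        rw [← pow_mul, pow_succ, Nat.mul_comm]
      have h4 : (Y ^ 2) ^ (2 ^ k) = Y ^ (2 ^ (k+1)) := by
        rw [← pow_mul, pow_succ, Nat.mul_comm]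
      calc ((X * Y) ^ (2 ^ (k+1))).trace ≤ ((X ^ 2 * Y ^ 2) ^ (2 ^ k)).trace := h1
        _ ≤ ((X ^ 2) ^ (2 ^ k) * (Y ^ 2) ^ (2 ^ k)).trace := h2
        _ = (X ^ (2 ^ (k+1)) * Y ^ (2 ^ (k+1))).trace := by rw [h3, h4]
    refine ⟨?_, hCH⟩
    intro X Y hX hY
    set S : Matrix ι ι ℝ := Y * X ^ 2 * Y with hS
    set T : Matrix ι ι ℝ := X * Y ^ 2 * X with hT
    have hSsym : Sᵀ = S := by
      rw [hS, Matrix.transpose_mul, Matrix.transpose_mul, Matrix.transpose_pow, hX, hY, mul_assoc]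
    have hTsym : Tᵀ = T := by
      rw [hT, Matrix.transpose_mul, Matrix.transpose_mul, Matrix.transpose_pow, hX, hY, mul_assoc]
    -- step a: rewrite the LHS power
    have ha : (X * Y) ^ (2 ^ (k+2)) = ((X * Y * X) * Y) ^ (2 ^ (k+1)) := by
      rw [show (2:ℕ) ^ (k+2) = 2 * 2 ^ (k+1) by ring, pow_mul,
        show (X * Y) ^ 2 = (X * Y * X) * Y by noncomm_ring]
    -- step b: apply Pk to (X*Y*X, Y)
    have hXYXsym : (X * Y * X)ᵀ = X * Y * X := by
      rw [Matrix.transpose_mul, Matrix.transpose_mul, hX, hY, mul_assoc]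
    have hb := Pk (X * Y * X) Y hXYXsym hY
    -- step c: trace identity
    have hc : (((X * Y * X) ^ 2 * Y ^ 2) ^ (2 ^ k)).trace = ((S * T) ^ (2 ^ k)).trace := by
      have e1 : (X * Y * X) ^ 2 * Y ^ 2 = X * (Y * X ^ 2 * Y * X * Y ^ 2) := by noncomm_ring
      have e2 : (Y * X ^ 2 * Y * X * Y ^ 2) * X = S * T := by rw [hS, hT]; noncomm_ring
      rw [e1, trace_pow_mul_comm, e2]
    -- step d: chain on (S, T)
    have hd := CHk S T hSsym hTsym
    -- step e,f: Cauchy-Schwarz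
    have hUsym : (S ^ (2 ^ k))ᵀ = S ^ (2 ^ k) := by rw [Matrix.transpose_pow, hSsym]
    have hVsym : (T ^ (2 ^ k))ᵀ = T ^ (2 ^ k) := by rw [Matrix.transpose_pow, hTsym]
    have he := trace_mul_le_sqrt (S ^ (2 ^ k)) (T ^ (2 ^ k)) hUsym hVsym
    have hf : ∀ W : Matrix ι ι ℝ, W ^ (2 ^ k) * W ^ (2 ^ k) = W ^ (2 ^ (k+1)) := by
      intro W; rw [← pow_add, show (2:ℕ) ^ k + 2 ^ k = 2 ^ (k+1) by ring]
    -- step g: isospectrality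
    have hg : (T ^ (2 ^ (k+1))).trace = (S ^ (2 ^ (k+1))).trace := by
      have e3 : T = (X * Y) * (Y * X) := by rw [hT]; noncomm_ring
      have e4 : S = (Y * X) * (X * Y) := by rw [hS]; noncomm_ring
      rw [e3, e4, trace_pow_mul_comm]
    -- step h: nonnegativity
    have hnn : 0 ≤ (S ^ (2 ^ (k+1))).trace := by
      have := trace_transpose_mul_nonneg (S ^ (2 ^ k))
      rwa [hUsym, hf] at this
    -- step i: identify RHS
    have hi : (S ^ (2 ^ (k+1))).trace = ((X ^ 2 * Y ^ 2) ^ (2 ^ (k+1))).trace := by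
      have e5 : S = Y * (X ^ 2 * Y) := by rw [hS]; noncomm_ring
      have e6 : (X ^ 2 * Y) * Y = X ^ 2 * Y ^ 2 := by noncomm_ring
      rw [e5, trace_pow_mul_comm, e6]
    calc ((X * Y) ^ (2 ^ (k+2))).trace
        = (((X * Y * X) * Y) ^ (2 ^ (k+1))).trace := by rw [ha]
      _ ≤ (((X * Y * X) ^ 2 * Y ^ 2) ^ (2 ^ k)).trace := hb
      _ = ((S * T) ^ (2 ^ k)).trace := hc
      _ ≤ (S ^ (2 ^ k) * T ^ (2 ^ k)).trace := hd
      _ ≤ Real.sqrt ((S ^ (2 ^ k) * S ^ (2 ^ k)).trace) *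
            Real.sqrt ((T ^ (2 ^ k) * T ^ (2 ^ k)).trace) := he
      _ = Real.sqrt ((S ^ (2 ^ (k+1))).trace) * Real.sqrt ((T ^ (2 ^ (k+1))).trace) := by
            rw [hf S, hf T]
      _ = (S ^ (2 ^ (k+1))).trace := by
            rw [hg, Real.mul_self_sqrt hnn]
      _ = ((X ^ 2 * Y ^ 2) ^ (2 ^ (k+1))).trace := hi

end TracePow

section Analysis
open NormedSpace Filter Finset
section BanachAlg
variable {A : Type*} [NormedRing A] [NormOneClass A] [NormedAlgebra ℝ A] [CompleteSpace A]

lemma exp_real_eq_tsum_div (t : ℝ) : Real.exp t = ∑' n : ℕ, t ^ n / (Nat.factorial n) := by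
  rw [Real.exp_eq_exp_ℝ, NormedSpace.exp_eq_tsum_div]

lemma my_norm_exp_le (x : A) : ‖exp x‖ ≤ Real.exp ‖x‖ := by
  rw [exp_eq_tsum (𝕂 := ℝ), exp_real_eq_tsum_div]
  refine (norm_tsum_le_tsum_norm (norm_expSeries_summable' x)).trans ?_
  refine Summable.tsum_le_tsum (fun n => ?_) (norm_expSeries_summable' x)
    (Real.summable_pow_div_factorial ‖x‖)
  rw [norm_smul, norm_inv, Real.norm_natCast, div_eq_inv_mul]
  refine mul_le_mul_of_nonneg_left (norm_pow_le _ _) ?_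
  positivity

lemma my_norm_exp_sub_one_sub_le (x : A) :
    ‖exp x - 1 - x‖ ≤ ‖x‖ ^ 2 * Real.exp ‖x‖ := by
  have hsum : Summable fun n : ℕ => ((Nat.factorial n : ℝ)⁻¹) • x ^ n :=
    expSeries_summable' (𝕂 := ℝ) x
  have hnorm : Summable fun n : ℕ => ‖((Nat.factorial n : ℝ)⁻¹) • x ^ n‖ :=
    norm_expSeries_summable' x
  have hsplit := Summable.sum_add_tsum_nat_add 2 hsum
  have hval : exp x = ∑' n : ℕ, ((Nat.factorial n : ℝ)⁻¹) • x ^ n := by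
    rw [exp_eq_tsum ℝ]
  have h0 : ∑ i ∈ Finset.range 2, ((Nat.factorial i : ℝ)⁻¹) • x ^ i = 1 + x := by
    simp [Finset.sum_range_succ]
  have hkey : exp x - 1 - x = ∑' n : ℕ, ((Nat.factorial (n + 2) : ℝ)⁻¹) • x ^ (n + 2) := by
    rw [hval, ← hsplit, h0]; abel
  rw [hkey]
  have hnorm2 : Summable fun n : ℕ => ‖((Nat.factorial (n + 2) : ℝ)⁻¹) • x ^ (n + 2)‖ :=
    (summable_nat_add_iff 2).2 hnorm
  refine (norm_tsum_le_tsum_norm hnorm2).trans ?_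
  have hRsum : Summable fun n : ℕ => ‖x‖ ^ 2 * (‖x‖ ^ n / (Nat.factorial n)) :=
    (Real.summable_pow_div_factorial ‖x‖).mul_left _
  refine (Summable.tsum_le_tsum (fun n => ?_) hnorm2 hRsum).trans ?_
  · rw [norm_smul, norm_inv, Real.norm_natCast]
    have h1 : ‖x ^ (n + 2)‖ ≤ ‖x‖ ^ (n + 2) := norm_pow_le _ _
    have h2 : ((Nat.factorial n : ℝ)) ≤ ((Nat.factorial (n + 2) : ℝ)) := by
      exact_mod_cast Nat.factorial_le (by omega)
    have hfe : (0:ℝ) < (Nat.factorial n : ℝ) := by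
      exact_mod_cast Nat.factorial_pos n
    have h3 : ((Nat.factorial (n + 2) : ℝ))⁻¹ ≤ ((Nat.factorial n : ℝ))⁻¹ :=
      inv_anti₀ hfe h2
    calc ((Nat.factorial (n + 2) : ℝ))⁻¹ * ‖x ^ (n + 2)‖
        ≤ ((Nat.factorial n : ℝ))⁻¹ * ‖x‖ ^ (n + 2) := by
          apply mul_le_mul h3 h1 (norm_nonneg _) (le_of_lt (inv_pos.2 hfe))
      _ = ‖x‖ ^ 2 * (‖x‖ ^ n / (Nat.factorial n)) := by ring
  · rw [tsum_mul_left, exp_real_eq_tsum_div]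

lemma my_pow_sub_pow (x y : A) (C : ℝ) (hC : 1 ≤ C) (hx : ‖x‖ ≤ C) (hy : ‖y‖ ≤ C) (m : ℕ) :
    ‖x ^ m - y ^ m‖ ≤ m * C ^ m * ‖x - y‖ := by
  have hC0 : 0 ≤ C := le_trans zero_le_one hC
  induction m with
  | zero => simp
  | succ m ih =>
    have h1 : x ^ (m + 1) - y ^ (m + 1) = x ^ m * (x - y) + (x ^ m - y ^ m) * y := by
      noncomm_ring
    have hxm : ‖x ^ m‖ ≤ C ^ m := (norm_pow_le _ _).trans (pow_le_pow_left₀ (norm_nonneg _) hx m)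
    have hCm : C ^ m ≤ C ^ (m + 1) := pow_le_pow_right₀ hC (by omega)
    have hnn : (0:ℝ) ≤ ‖x - y‖ := norm_nonneg _
    have hCmn : (0:ℝ) ≤ C ^ m := pow_nonneg hC0 m
    calc ‖x ^ (m + 1) - y ^ (m + 1)‖
        ≤ ‖x ^ m * (x - y)‖ + ‖(x ^ m - y ^ m) * y‖ := by rw [h1]; exact norm_add_le _ _
      _ ≤ ‖x ^ m‖ * ‖x - y‖ + ‖x ^ m - y ^ m‖ * ‖y‖ :=
          add_le_add (norm_mul_le _ _) (norm_mul_le _ _)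
      _ ≤ C ^ m * ‖x - y‖ + (m * C ^ m * ‖x - y‖) * C := by
          refine add_le_add (mul_le_mul_of_nonneg_right hxm hnn) ?_
          refine mul_le_mul ih hy (norm_nonneg _) ?_
          positivity
      _ = (C ^ m + ↑m * C ^ (m + 1)) * ‖x - y‖ := by rw [pow_succ]; ring
      _ ≤ (↑(m + 1)) * C ^ (m + 1) * ‖x - y‖ := by
          push_cast
          nlinarith [mul_le_mul_of_nonneg_right hCm hnn]
end BanachAlg

section BanachAlg2
variable {A : Type*} [NormedRing A] [NormOneClass A] [NormedAlgebra ℝ A] [CompleteSpace A]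

set_option maxHeartbeats 1000000 in
lemma my_trotter_bound (a b : A) : ∃ K : ℝ, 0 ≤ K ∧ ∀ m : ℕ, 1 ≤ m →
    ‖(exp ((m:ℝ)⁻¹ • a) * exp ((m:ℝ)⁻¹ • b)) ^ m - exp (a + b)‖ ≤ K / m := by
  set na := ‖a‖ with hna
  set nb := ‖b‖ with hnb
  set s := na + nb with hs
  set K1 : ℝ := na * nb + na ^ 2 * Real.exp na * Real.exp nb
      + (1 + na) * (nb ^ 2 * Real.exp nb) + s ^ 2 * Real.exp s with hK1
  have hK1nn : 0 ≤ K1 := by positivity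
  refine ⟨Real.exp s * K1, by positivity, ?_⟩
  intro m hm
  have hm0 : (0:ℝ) < (m:ℝ) := by exact_mod_cast hm
  set u : ℝ := (m:ℝ)⁻¹ with hu
  have hu0 : 0 < u := inv_pos.2 hm0
  have hu1 : u ≤ 1 := by
    rw [hu]
    exact inv_le_one_of_one_le₀ (by exact_mod_cast hm)
  have hmu : (m:ℝ) * u = 1 := mul_inv_cancel₀ (ne_of_gt hm0)
  set α : A := u • a with hα
  set β : A := u • b with hβ
  set X := exp α with hX
  set Y := exp β with hY
  set Z := exp (u • (a + b)) with hZ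
  have hαn : ‖α‖ = u * na := by rw [hα, norm_smul, Real.norm_eq_abs, abs_of_pos hu0, hna]
  have hβn : ‖β‖ = u * nb := by rw [hβ, norm_smul, Real.norm_eq_abs, abs_of_pos hu0, hnb]
  have hαle : ‖α‖ ≤ na := by rw [hαn]; nlinarith [norm_nonneg a]
  have hβle : ‖β‖ ≤ nb := by rw [hβn]; nlinarith [norm_nonneg b]
  have hγn : ‖u • (a + b)‖ ≤ u * s := by
    rw [norm_smul, Real.norm_eq_abs, abs_of_pos hu0, hs]
    exact mul_le_mul_of_nonneg_left (norm_add_le a b) (le_of_lt hu0)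
  have hγle : ‖u • (a + b)‖ ≤ s := by
    refine hγn.trans ?_
    nlinarith [norm_nonneg a, norm_nonneg b]
  have hsnn : 0 ≤ s := by positivity
  -- the quadratic error bound
  have key : X * Y - Z = (X - 1 - α) * Y + (1 + α) * (Y - 1 - β) - (Z - 1 - (α + β)) + α * β := by
    noncomm_ring
  have hE1 : ‖X - 1 - α‖ ≤ u ^ 2 * (na ^ 2 * Real.exp na) := by
    refine (my_norm_exp_sub_one_sub_le α).trans ?_
    have h2 := Real.exp_le_exp.2 hαle
    calc ‖α‖ ^ 2 * Real.exp ‖α‖ ≤ ‖α‖ ^ 2 * Real.exp na :=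
          mul_le_mul_of_nonneg_left h2 (by positivity)
      _ = (u * na) ^ 2 * Real.exp na := by rw [hαn]
      _ = u ^ 2 * (na ^ 2 * Real.exp na) := by ring
  have hE2 : ‖Y - 1 - β‖ ≤ u ^ 2 * (nb ^ 2 * Real.exp nb) := by
    refine (my_norm_exp_sub_one_sub_le β).trans ?_
    have h2 := Real.exp_le_exp.2 hβle
    calc ‖β‖ ^ 2 * Real.exp ‖β‖ ≤ ‖β‖ ^ 2 * Real.exp nb :=
          mul_le_mul_of_nonneg_left h2 (by positivity)
      _ = (u * nb) ^ 2 * Real.exp nb := by rw [hβn]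
      _ = u ^ 2 * (nb ^ 2 * Real.exp nb) := by ring
  have hE3 : ‖Z - 1 - (α + β)‖ ≤ u ^ 2 * (s ^ 2 * Real.exp s) := by
    have h1 : α + β = u • (a + b) := by rw [hα, hβ, smul_add]
    rw [h1]
    refine (my_norm_exp_sub_one_sub_le _).trans ?_
    have h2 := Real.exp_le_exp.2 hγle
    calc ‖u • (a + b)‖ ^ 2 * Real.exp ‖u • (a + b)‖ ≤ (u * s) ^ 2 * Real.exp s :=
          mul_le_mul (pow_le_pow_left₀ (norm_nonneg _) hγn 2) h2 (Real.exp_pos _).le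
            (by positivity)
      _ = u ^ 2 * (s ^ 2 * Real.exp s) := by ring
  have hYle : ‖Y‖ ≤ Real.exp nb := (my_norm_exp_le β).trans (Real.exp_le_exp.2 hβle)
  have h1α : ‖(1:A) + α‖ ≤ 1 + na := by
    refine (norm_add_le _ _).trans ?_
    rw [norm_one]
    exact add_le_add_right hαle 1
  have hαβ : ‖α * β‖ ≤ u ^ 2 * (na * nb) := by
    refine (norm_mul_le _ _).trans ?_
    rw [hαn, hβn]
    exact le_of_eq (by ring)
  have hdiff : ‖X * Y - Z‖ ≤ u ^ 2 * K1 := by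
    rw [key]
    calc ‖(X - 1 - α) * Y + (1 + α) * (Y - 1 - β) - (Z - 1 - (α + β)) + α * β‖
        ≤ ‖(X - 1 - α) * Y + (1 + α) * (Y - 1 - β) - (Z - 1 - (α + β))‖ + ‖α * β‖ :=
          norm_add_le _ _
      _ ≤ ‖(X - 1 - α) * Y + (1 + α) * (Y - 1 - β)‖ + ‖Z - 1 - (α + β)‖ + ‖α * β‖ := by
          gcongr; exact norm_sub_le _ _
      _ ≤ ‖(X - 1 - α) * Y‖ + ‖(1 + α) * (Y - 1 - β)‖ + ‖Z - 1 - (α + β)‖ + ‖α * β‖ := by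
          gcongr; exact norm_add_le _ _
      _ ≤ ‖X - 1 - α‖ * ‖Y‖ + ‖1 + α‖ * ‖Y - 1 - β‖ + ‖Z - 1 - (α + β)‖ + ‖α * β‖ := by
          gcongr <;> exact norm_mul_le _ _
      _ ≤ (u ^ 2 * (na ^ 2 * Real.exp na)) * Real.exp nb
            + (1 + na) * (u ^ 2 * (nb ^ 2 * Real.exp nb))
            + u ^ 2 * (s ^ 2 * Real.exp s) + u ^ 2 * (na * nb) := by
          refine add_le_add (add_le_add (add_le_add ?_ ?_) hE3) hαβ
          · exact mul_le_mul hE1 hYle (norm_nonneg _) (by positivity)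
          · exact mul_le_mul h1α hE2 (norm_nonneg _) (by positivity)
      _ = u ^ 2 * K1 := by rw [hK1]; ring
  -- uniform bound on the factors
  set C : ℝ := Real.exp (u * s) with hC
  have hC1 : 1 ≤ C := Real.one_le_exp (by positivity)
  have hXY : ‖X * Y‖ ≤ C := by
    refine (norm_mul_le _ _).trans ?_
    have h1 : ‖X‖ ≤ Real.exp (u * na) := by
      refine (my_norm_exp_le α).trans ?_
      rw [hαn]
    have h2 : ‖Y‖ ≤ Real.exp (u * nb) := by
      refine (my_norm_exp_le β).trans ?_
      rw [hβn]
    calc ‖X‖ * ‖Y‖ ≤ Real.exp (u * na) * Real.exp (u * nb) := by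
          exact mul_le_mul h1 h2 (norm_nonneg _) (Real.exp_pos _).le
      _ = C := by rw [hC, ← Real.exp_add, hs]; ring_nf
  have hZle : ‖Z‖ ≤ C := by
    refine (my_norm_exp_le _).trans ?_
    rw [hC]
    refine Real.exp_le_exp.2 ?_
    refine hγn.trans (le_of_eq rfl)
  have hCm : C ^ m = Real.exp s := by
    rw [hC, ← Real.exp_nat_mul]
    congr 1
    rw [← mul_assoc, hmu, one_mul]
  have hZm : Z ^ m = exp (a + b) := by
    letI : NormedAlgebra ℚ A := NormedAlgebra.restrictScalars ℚ ℝ A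
    rw [hZ, ← NormedSpace.exp_nsmul]
    congr 1
    rw [← Nat.cast_smul_eq_nsmul ℝ, smul_smul, hmu, one_smul]
  have hfinal := my_pow_sub_pow (X * Y) Z C hC1 hXY hZle m
  rw [hZm, hCm] at hfinal
  refine hfinal.trans ?_
  calc (m:ℝ) * Real.exp s * ‖X * Y - Z‖ ≤ (m:ℝ) * Real.exp s * (u ^ 2 * K1) :=
        mul_le_mul_of_nonneg_left hdiff (by positivity)
    _ = Real.exp s * K1 / m := by
        rw [hu]; field_simp
end BanachAlg2

section BanachAlg3
variable {A : Type*} [NormedRing A] [NormOneClass A] [NormedAlgebra ℝ A] [CompleteSpace A]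

lemma my_trotter (a b : A) :
    Filter.Tendsto (fun k : ℕ =>
      (exp (((2 ^ k : ℕ) : ℝ)⁻¹ • a) * exp (((2 ^ k : ℕ) : ℝ)⁻¹ • b)) ^ (2 ^ k : ℕ))
      Filter.atTop (nhds (exp (a + b))) := by
  obtain ⟨K, hK, hbound⟩ := my_trotter_bound a b
  rw [tendsto_iff_norm_sub_tendsto_zero]
  refine squeeze_zero (fun k => norm_nonneg _)
    (fun k => hbound (2 ^ k) Nat.one_le_two_pow) ?_
  have h1 : (fun k : ℕ => K / ((2 ^ k : ℕ) : ℝ)) = fun k : ℕ => K * ((1:ℝ)/2) ^ k := by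
    funext k
    push_cast
    rw [one_div, inv_pow, div_eq_mul_inv]
  rw [h1]
  have := (tendsto_pow_atTop_nhds_zero_of_lt_one (by norm_num : (0:ℝ) ≤ 1/2)
    (by norm_num : (1:ℝ)/2 < 1)).const_mul K
  simpa using this
end BanachAlg3


section GTfinal
open NormedSpace Filter Matrix

theorem golden_thompson {n : ℕ} (A B : Matrix (Fin n) (Fin n) ℝ) (hA : Aᵀ = A) (hB : Bᵀ = B) :
    (exp (A + B)).trace ≤ (exp A * exp B).trace := by
  rcases isEmpty_or_nonempty (Fin n) with he | hne
  · simp [Matrix.trace]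
  letI : SeminormedRing (Matrix (Fin n) (Fin n) ℝ) := Matrix.linftyOpSemiNormedRing
  letI : NormedRing (Matrix (Fin n) (Fin n) ℝ) := Matrix.linftyOpNormedRing
  letI : NormedAlgebra ℝ (Matrix (Fin n) (Fin n) ℝ) := Matrix.linftyOpNormedAlgebra
  have hcont : Continuous (fun M : Matrix (Fin n) (Fin n) ℝ => M.trace) :=
    LinearMap.continuous_of_finiteDimensional (Matrix.traceLinearMap (Fin n) ℝ ℝ)
  have htrot := my_trotter A B
  have htend := (hcont.tendsto (exp (A + B))).comp htrot
  refine le_of_tendsto htend (Filter.Eventually.of_forall fun k => ?_)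
  have hc : ((2 ^ k : ℕ) : ℝ) ≠ 0 := by positivity
  set u : ℝ := ((2 ^ k : ℕ) : ℝ)⁻¹ with hu
  have hXsym : (exp (u • A))ᵀ = exp (u • A) := by
    rw [← Matrix.exp_transpose, Matrix.transpose_smul, hA]
  have hYsym : (exp (u • B))ᵀ = exp (u • B) := by
    rw [← Matrix.exp_transpose, Matrix.transpose_smul, hB]
  have hNpow : ∀ M : Matrix (Fin n) (Fin n) ℝ, (2 ^ k : ℕ) • (u • M) = M := by
    intro M
    rw [← Nat.cast_smul_eq_nsmul ℝ, smul_smul, hu, mul_inv_cancel₀ hc, one_smul]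
  have hXpow : exp (u • A) ^ (2 ^ k : ℕ) = exp A := by
    rw [← Matrix.exp_nsmul, hNpow]
  have hYpow : exp (u • B) ^ (2 ^ k : ℕ) = exp B := by
    rw [← Matrix.exp_nsmul, hNpow]
  have := (gt_key k).2 (exp (u • A)) (exp (u • B)) hXsym hYsym
  rw [hXpow, hYpow] at this
  exact this


/-- Minorization: with `g(λ) = b·λ − β⁻¹ Tr[exp(−β(C − diag(λ)))]` and
`g⁰(λ) = b·λ − β⁻¹ Tr[exp(β diag(λ − λ⁰)) exp(−β(C − diag(λ⁰)))]`, one has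
`g⁰ ≤ g` pointwise, with equality at `λ = λ⁰`. -/
theorem minorization {n : ℕ} (C : Matrix (Fin n) (Fin n) ℝ) (hC : C.IsHermitian)
    (b : Fin n → ℝ) (β : ℝ) (hβ : 0 < β) (lam0 : Fin n → ℝ)
    (g g0 : (Fin n → ℝ) → ℝ)
    (hg : ∀ l, g l = b ⬝ᵥ l - β⁻¹ * (NormedSpace.exp ((-β) • (C - Matrix.diagonal l))).trace)
    (hg0 : ∀ l, g0 l = b ⬝ᵥ l - β⁻¹ *
      (NormedSpace.exp (β • Matrix.diagonal (l - lam0)) *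
        NormedSpace.exp ((-β) • (C - Matrix.diagonal lam0))).trace) :
    (∀ l, g0 l ≤ g l) ∧ g0 lam0 = g lam0 := by
  have hCt : Cᵀ = C := by
    rw [← Matrix.conjTranspose_eq_transpose_of_trivial]
    exact hC
  constructor
  · intro l
    rw [hg, hg0]
    set H1 := β • Matrix.diagonal (l - lam0) with hH1
    set H2 := (-β) • (C - Matrix.diagonal lam0) with hH2
    have hH1sym : H1ᵀ = H1 := by
      rw [hH1, Matrix.transpose_smul, Matrix.diagonal_transpose]
    have hH2sym : H2ᵀ = H2 := by
      rw [hH2, Matrix.transpose_smul, Matrix.transpose_sub, hCt, Matrix.diagonal_transpose]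
    have hsum : H1 + H2 = (-β) • (C - Matrix.diagonal l) := by
      have hd : Matrix.diagonal (l - lam0) = Matrix.diagonal l - Matrix.diagonal lam0 := by
        rw [Matrix.diagonal_sub]
        rfl
      rw [hH1, hH2, hd]
      module
    have hGT := golden_thompson H1 H2 hH1sym hH2sym
    rw [hsum] at hGT
    have := mul_le_mul_of_nonneg_left hGT (inv_nonneg.2 hβ.le)
    linarith
  · rw [hg, hg0, sub_self]
    have : Matrix.diagonal (0 : Fin n → ℝ) = (0 : Matrix (Fin n) (Fin n) ℝ) :=
      Matrix.diagonal_zero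
    rw [this, smul_zero, NormedSpace.exp_zero, one_mul]
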